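/- arXiv:2404.02266 — 4 statements merged into one kernel-verified Lean document; each statement's English description precedes it below -/
import Mathlib

section
/- Suppose min_k(s_{k+1}−s_k) ≥ t^{γ0} and fix 0 < β < γ < γ0. Then there exist constants C1, C2 > 0, not depending on k, such that for all sufficiently large t and every 1 ≤ k ≤ M−1, P(#E_{k,γ}(t) ≥ C1·t^{γ−β}) ≥ 1 − exp(−C2·t^{γ−β}). -/
open MeasureTheory ProbabilityTheory Finset Real
open scoped ProbabilityTheory

/-- `#E_{k,γ}(t)`: the number of sampling times lying between `s k` and `s k + t^γ`. -/
noncomputable def epochSampCount {Ω : Type*} (Z : ℕ → Ω → ℕ) (s : ℕ → ℕ) (t : ℕ) (γ : ℝ)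
    (k : ℕ) (ω : Ω) : ℕ :=
  ((Finset.Icc 1 t).filter
    (fun j => Z j ω = 1 ∧ s k ≤ j ∧ (j : ℝ) ≤ (s k : ℝ) + (t : ℝ) ^ γ)).card

/-- integral of the real-cast of a 0/1-valued random variable. -/
lemma binary_integral {Ω : Type} [MeasureSpace Ω] [IsProbabilityMeasure (ℙ : Measure Ω)]
    (Z : Ω → ℕ) (hm : Measurable Z) (h01 : ∀ ω, Z ω = 0 ∨ Z ω = 1) :
    Integrable (fun ω => (Z ω : ℝ)) ℙ ∧
      ∫ ω, (Z ω : ℝ) ∂ℙ = (ℙ {ω | Z ω = 1}).toReal := by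
  have hset : MeasurableSet {ω | Z ω = 1} := hm (measurableSet_singleton 1)
  have heq : (fun ω => (Z ω : ℝ)) = fun ω => ({ω | Z ω = 1}).indicator 1 ω := by
    funext ω
    rcases h01 ω with h | h <;> simp [Set.indicator, h]
  constructor
  · have hmeas : Measurable fun ω => (Z ω : ℝ) := measurable_from_top.comp hm
    refine (integrable_const (1 : ℝ)).mono' hmeas.aestronglyMeasurable ?_
    refine ae_of_all _ fun ω => ?_
    rcases h01 ω with h | h <;> simp [h]
  · rw [heq, integral_indicator_one hset]; rfl

lemma binary_mgf {Ω : Type} [MeasureSpace Ω] [IsProbabilityMeasure (ℙ : Measure Ω)]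
    (Z : Ω → ℕ) (hm : Measurable Z) (h01 : ∀ ω, Z ω = 0 ∨ Z ω = 1) :
    mgf (fun ω => (Z ω : ℝ)) ℙ (-1)
      = 1 - (1 - Real.exp (-1)) * (ℙ {ω | Z ω = 1}).toReal := by
  obtain ⟨hint, hval⟩ := binary_integral Z hm h01
  have heq : ∀ ω, Real.exp ((-1) * (Z ω : ℝ)) = 1 - (1 - Real.exp (-1)) * (Z ω : ℝ) := by
    intro ω
    rcases h01 ω with h | h <;> simp [h]
  rw [mgf]
  calc ∫ ω, Real.exp ((-1) * (Z ω : ℝ)) ∂ℙ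
      = ∫ ω, (1 - (1 - Real.exp (-1)) * (Z ω : ℝ)) ∂ℙ :=
        integral_congr_ae (ae_of_all _ heq)
    _ = 1 - (1 - Real.exp (-1)) * (ℙ {ω | Z ω = 1}).toReal := by
        rw [integral_sub (integrable_const 1) (hint.const_mul _), integral_const,
          integral_const_mul, hval]
        simp

/-- Suppose `min_k (s_{k+1} − s_k) ≥ t^{γ0}` and fix `0 < β < γ < γ0`. Then
there exist constants `C1, C2 > 0`, not depending on `k`, such that for all sufficiently
large `t` and every `1 ≤ k ≤ M − 1`,
`P(#E_{k,γ}(t) ≥ C1·t^{γ−β}) ≥ 1 − exp(−C2·t^{γ−β})`. -/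
theorem epoch_sample_count_lower_bound
    (γ0 β γ : ℝ) (hγ00 : 0 < γ0) (hγ01 : γ0 ≤ 1)
    (hβ0 : 0 < β) (hβγ : β < γ) (hγγ0 : γ < γ0) :
    ∃ C1 C2 : ℝ, 0 < C1 ∧ 0 < C2 ∧ ∃ t0 : ℕ, ∀ t : ℕ, t0 ≤ t →
      ∀ (Ω : Type) (_ : MeasureSpace Ω), IsProbabilityMeasure (ℙ : Measure Ω) →
      ∀ (M : ℕ) (s : ℕ → ℕ) (Z : ℕ → Ω → ℕ),
        2 ≤ M → s 1 = 1 → s M = t →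
        (∀ k : ℕ, 1 ≤ k → k < M → s k < s (k + 1)) →
        (∀ k : ℕ, 1 ≤ k → k < M → (t : ℝ) ^ γ0 ≤ (s (k + 1) : ℝ) - (s k : ℝ)) →
        (∀ j, Measurable (Z j)) →
        (∀ j, ∀ ω, Z j ω = 0 ∨ Z j ω = 1) →
        (∀ j : ℕ, 1 ≤ j → ℙ {ω | Z j ω = 1} = ENNReal.ofReal ((j : ℝ) ^ (-β))) →
        iIndepFun Z ℙ →
        ∀ k : ℕ, 1 ≤ k → k < M →
          1 - ENNReal.ofReal (Real.exp (-C2 * (t : ℝ) ^ (γ - β)))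
            ≤ ℙ {ω | C1 * (t : ℝ) ^ (γ - β) ≤ (epochSampCount Z s t γ k ω : ℝ)} := by
  classical
  have hexp1 : Real.exp (-1) < 1 := by
    rw [← Real.exp_zero]; exact Real.exp_lt_exp.mpr (by norm_num)
  have hexp0 : 0 < Real.exp (-1) := Real.exp_pos _
  set c : ℝ := 1 - Real.exp (-1) with hc
  have hc0 : 0 < c := by rw [hc]; linarith
  have hc1 : c < 1 := by rw [hc]; linarith
  refine ⟨c / 2, c / 2, by positivity, by positivity, 1, ?_⟩
  intro t ht Ω _ hprob M s Z hM hs1 hsM hmono hgap hZmeas hZ01 hZprob hZind k hk1 hkM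
  -- monotonicity of s on [1, M]
  have hmono' : ∀ a b, 1 ≤ a → a ≤ b → b ≤ M → s a ≤ s b := by
    intro a b ha hab hbM
    induction b with
    | zero => omega
    | succ b ih =>
      rcases Nat.eq_or_lt_of_le hab with h | h
      · rw [h]
      · have hab' : a ≤ b := by omega
        exact le_trans (ih hab' (by omega)) (hmono b (by omega) (by omega)).le
  have h2t : 2 ≤ t := by
    have h12 : s 1 < s 2 := hmono 1 le_rfl (by omega)
    have h2M : s 2 ≤ s M := hmono' 2 M (by omega) hM le_rfl
    omega
  have ht0 : (0 : ℝ) < t := by exact_mod_cast Nat.lt_of_lt_of_le (by norm_num) h2t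
  have ht1 : (1 : ℝ) < t := by exact_mod_cast Nat.lt_of_lt_of_le (by norm_num) h2t
  set T : ℝ := (t : ℝ) ^ (γ - β) with hTdef
  have hTpos : 0 < T := Real.rpow_pos_of_pos ht0 _
  have hγpos : 0 < γ := lt_trans hβ0 hβγ
  set F : Finset ℕ :=
    (Finset.Icc 1 t).filter (fun j => s k ≤ j ∧ (j : ℝ) ≤ (s k : ℝ) + (t : ℝ) ^ γ) with hFdef
  set m : ℕ := Nat.floor ((t : ℝ) ^ γ) with hmdef
  have htγ0 : 0 ≤ (t : ℝ) ^ γ := (Real.rpow_pos_of_pos ht0 _).le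
  have hsk1 : 1 ≤ s k := hs1 ▸ hmono' 1 k le_rfl hk1 (le_of_lt hkM)
  have hup : (s k : ℝ) + (t : ℝ) ^ γ ≤ (t : ℝ) := by
    have hga := hgap k hk1 hkM
    have hsk1M : s (k + 1) ≤ s M := hmono' (k + 1) M (by omega) (by omega) le_rfl
    have h1 : (s (k + 1) : ℝ) ≤ (t : ℝ) := by exact_mod_cast hsM ▸ hsk1M
    have h2 : (t : ℝ) ^ γ ≤ (t : ℝ) ^ γ0 := Real.rpow_le_rpow_of_exponent_le ht1.le hγγ0.le
    linarith
  have hWsub : Finset.Icc (s k) (s k + m) ⊆ F := by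
    intro j hj
    rw [Finset.mem_Icc] at hj
    have hmle : (m : ℝ) ≤ (t : ℝ) ^ γ := Nat.floor_le htγ0
    have hjle : (j : ℝ) ≤ (s k : ℝ) + (t : ℝ) ^ γ := by
      have h1 : (j : ℝ) ≤ (s k : ℝ) + (m : ℝ) := by exact_mod_cast hj.2
      linarith
    have hjt : j ≤ t := by exact_mod_cast hjle.trans hup
    rw [hFdef, Finset.mem_filter, Finset.mem_Icc]
    exact ⟨⟨le_trans hsk1 hj.1, hjt⟩, hj.1, hjle⟩
  -- sum of success probabilities over the window
  have hmemF : ∀ j ∈ F, 1 ≤ j ∧ j ≤ t := by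
    intro j hj
    rw [hFdef, Finset.mem_filter, Finset.mem_Icc] at hj
    exact hj.1
  have hpsum : T ≤ ∑ j ∈ F, (j : ℝ) ^ (-β) := by
    have hstep : ∀ j ∈ Finset.Icc (s k) (s k + m), (t : ℝ) ^ (-β) ≤ (j : ℝ) ^ (-β) := by
      intro j hj
      obtain ⟨h1j, hjt⟩ := hmemF j (hWsub hj)
      have hj0 : (0 : ℝ) < j := by exact_mod_cast h1j
      exact Real.rpow_le_rpow_of_nonpos hj0 (by exact_mod_cast hjt) (by linarith)
    calc T = (t : ℝ) ^ γ * (t : ℝ) ^ (-β) := by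
            rw [hTdef, ← Real.rpow_add ht0]; ring_nf
      _ ≤ ((m : ℝ) + 1) * (t : ℝ) ^ (-β) := by
            have hfl : (t : ℝ) ^ γ ≤ (m : ℝ) + 1 := (Nat.lt_floor_add_one _).le
            exact mul_le_mul_of_nonneg_right hfl (Real.rpow_pos_of_pos ht0 _).le
      _ = ∑ _j ∈ Finset.Icc (s k) (s k + m), (t : ℝ) ^ (-β) := by
            rw [Finset.sum_const, Nat.card_Icc]
            have : s k + m + 1 - s k = m + 1 := by omega
            rw [this, nsmul_eq_mul]
            push_cast; ring
      _ ≤ ∑ j ∈ Finset.Icc (s k) (s k + m), (j : ℝ) ^ (-β) := Finset.sum_le_sum hstep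
      _ ≤ ∑ j ∈ F, (j : ℝ) ^ (-β) :=
            Finset.sum_le_sum_of_subset_of_nonneg hWsub
              (fun j _ _ => Real.rpow_nonneg (Nat.cast_nonneg j) _)
  -- the real-valued sum
  set X : ℕ → Ω → ℝ := fun j ω => (Z j ω : ℝ) with hXdef
  set S : Ω → ℝ := fun ω => ∑ j ∈ F, X j ω with hSdef
  have hXmeas : ∀ j, Measurable (X j) := fun j => measurable_from_top.comp (hZmeas j)
  have hSmeas : Measurable S := Finset.measurable_sum F fun j _ => hXmeas j
  have hXind : iIndepFun X ℙ :=
    hZind.comp (fun _ => (Nat.cast : ℕ → ℝ)) (fun _ => measurable_from_top)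
  have hcount : ∀ ω, (epochSampCount Z s t γ k ω : ℝ) = S ω := by
    intro ω
    have h1 : epochSampCount Z s t γ k ω = ∑ j ∈ F, Z j ω := by
      rw [epochSampCount]
      have h2 : ((Finset.Icc 1 t).filter
          (fun j => Z j ω = 1 ∧ s k ≤ j ∧ (j : ℝ) ≤ (s k : ℝ) + (t : ℝ) ^ γ))
            = F.filter (fun j => Z j ω = 1) := by
        rw [hFdef, Finset.filter_filter]
        exact Finset.filter_congr (fun j _ => by tauto)
      rw [h2, Finset.card_filter]
      refine Finset.sum_congr rfl fun j _ => ?_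
      rcases hZ01 j ω with h | h <;> simp [h]
    rw [h1, hSdef]
    push_cast
    rfl
  have hS0 : ∀ ω, 0 ≤ S ω := fun ω =>
    Finset.sum_nonneg fun j _ => Nat.cast_nonneg _
  -- mgf bound
  have hSfun : S = ∑ j ∈ F, X j := by
    funext ω; rw [hSdef, Finset.sum_apply]
  have hmgfS : mgf S ℙ (-1) ≤ Real.exp (-(c * T)) := by
    rw [hSfun, hXind.mgf_sum hXmeas]
    have hterm : ∀ j ∈ F, mgf (X j) ℙ (-1) = 1 - c * (j : ℝ) ^ (-β) := by
      intro j hj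
      have h1j : 1 ≤ j := (hmemF j hj).1
      rw [hXdef]
      rw [binary_mgf (Z j) (hZmeas j) (fun ω => hZ01 j ω), hZprob j h1j,
        ENNReal.toReal_ofReal (Real.rpow_nonneg (Nat.cast_nonneg j) _)]
    have hple : ∀ j ∈ F, (j : ℝ) ^ (-β) ≤ 1 := by
      intro j hj
      exact Real.rpow_le_one_of_one_le_of_nonpos
        (by exact_mod_cast (hmemF j hj).1) (by linarith)
    have hpnn : ∀ j : ℕ, (0:ℝ) ≤ (j : ℝ) ^ (-β) := fun j => Real.rpow_nonneg (Nat.cast_nonneg j) _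
    calc ∏ j ∈ F, mgf (X j) ℙ (-1) = ∏ j ∈ F, (1 - c * (j : ℝ) ^ (-β)) :=
          Finset.prod_congr rfl hterm
      _ ≤ ∏ j ∈ F, Real.exp (-(c * (j : ℝ) ^ (-β))) := by
          refine Finset.prod_le_prod (fun j hj => ?_) (fun j hj => ?_)
          · have := mul_le_of_le_one_right hc0.le (hple j hj)
            linarith
          · have := Real.add_one_le_exp (-(c * (j : ℝ) ^ (-β)))
            linarith
      _ = Real.exp (∑ j ∈ F, -(c * (j : ℝ) ^ (-β))) := (Real.exp_sum _ _).symm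
      _ ≤ Real.exp (-(c * T)) := by
          apply Real.exp_le_exp.mpr
          have : ∑ j ∈ F, -(c * (j : ℝ) ^ (-β)) = -(c * ∑ j ∈ F, (j : ℝ) ^ (-β)) := by
            rw [Finset.mul_sum, ← Finset.sum_neg_distrib]
          rw [this]
          have := mul_le_mul_of_nonneg_left hpsum hc0.le
          linarith
  -- Chernoff bound
  have hintS : Integrable (fun ω => Real.exp ((-1) * S ω)) ℙ := by
    refine (integrable_const (1 : ℝ)).mono'
      (((hSmeas.const_mul _).exp).aestronglyMeasurable) (ae_of_all _ fun ω => ?_)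
    rw [Real.norm_eq_abs, abs_of_pos (Real.exp_pos _)]
    have := hS0 ω
    exact Real.exp_le_one_iff.mpr (by nlinarith)
  have hcher := measure_le_le_exp_mul_mgf (μ := ℙ) (X := S) (c / 2 * T)
    (by norm_num : (-1 : ℝ) ≤ 0) hintS
  have hbound : (ℙ {ω | S ω ≤ c / 2 * T}).toReal ≤ Real.exp (-(c / 2) * T) := by
    have h1 : Real.exp (-(-1 : ℝ) * (c / 2 * T)) * mgf S ℙ (-1)
        ≤ Real.exp (c / 2 * T) * Real.exp (-(c * T)) := by
      rw [show (-(-1 : ℝ) * (c / 2 * T)) = c / 2 * T by ring]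
      exact mul_le_mul_of_nonneg_left hmgfS (Real.exp_pos _).le
    rw [← Real.exp_add] at h1
    calc (ℙ {ω | S ω ≤ c / 2 * T}).toReal
        ≤ Real.exp (-(-1 : ℝ) * (c / 2 * T)) * mgf S ℙ (-1) := hcher
      _ ≤ Real.exp (c / 2 * T + -(c * T)) := h1
      _ ≤ Real.exp (-(c / 2) * T) := by
          apply Real.exp_le_exp.mpr; ring_nf; linarith
  -- conclusion
  set A : Set Ω := {ω | c / 2 * T ≤ S ω} with hAdef
  have hAmeas : MeasurableSet A := measurableSet_le measurable_const hSmeas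
  have hsetEq : {ω | c / 2 * T ≤ (epochSampCount Z s t γ k ω : ℝ)} = A := by
    ext ω; simp only [hAdef, Set.mem_setOf_eq, hcount ω]
  rw [hsetEq]
  have hAc : ℙ Aᶜ ≤ ENNReal.ofReal (Real.exp (-(c / 2) * T)) := by
    have hsub : Aᶜ ⊆ {ω | S ω ≤ c / 2 * T} := by
      intro ω hω
      simp only [hAdef, Set.mem_compl_iff, Set.mem_setOf_eq, not_le] at hω
      exact le_of_lt hω
    calc ℙ Aᶜ ≤ ℙ {ω | S ω ≤ c / 2 * T} := measure_mono hsub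
      _ = ENNReal.ofReal ((ℙ {ω | S ω ≤ c / 2 * T}).toReal) :=
          (ENNReal.ofReal_toReal (measure_ne_top _ _)).symm
      _ ≤ ENNReal.ofReal (Real.exp (-(c / 2) * T)) := ENNReal.ofReal_le_ofReal hbound
  calc 1 - ENNReal.ofReal (Real.exp (-(c / 2) * T)) ≤ 1 - ℙ Aᶜ := tsub_le_tsub_left hAc 1
    _ = ℙ A := by
        rw [show (1 : ENNReal) - ℙ Aᶜ = ℙ Aᶜᶜ from (prob_compl_eq_one_sub hAmeas.compl).symm,
          compl_compl]
end

section
/- Let 0 < β < 1 and let {Z_j}_{j≥1} be independent Bernoulli random variables with P(Z_j = 1) = j^{−β}; write #E(r) = Σ_{j=1}^r Z_j and a(1,r) = Σ_{j=1}^r j^{−β}. Define E_exp = ∩_{r ≥ (log t)^{2/(1−β)}} { a(1,r)(1 − 1/log r) ≤ #E(r) ≤ a(1,r)(1 + 1/log r) }, the intersection over all integers r with (log t)^{2/(1−β)} ≤ r ≤ t. Then for all sufficiently large t, P(E_exp) ≥ 1 − exp(−(log t)^{3/2}). -/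
open MeasureTheory ProbabilityTheory Finset Real
open scoped ProbabilityTheory

/-- `#E(r)`, the number of sampling times among `{1, …, r}`. -/
def sampCount {Ω : Type*} (Z : ℕ → Ω → ℕ) (r : ℕ) (ω : Ω) : ℕ :=
  ((Finset.Icc 1 r).filter (fun j => Z j ω = 1)).card

section Aux

open Filter Asymptotics

lemma aux_exp_le_quad {x : ℝ} (hx : |x| ≤ 1) : Real.exp x ≤ 1 + x + x ^ 2 := by
  have h := Real.exp_bound hx (n := 2) (by norm_num)
  have h2 : ∑ m ∈ Finset.range 2, x ^ m / m.factorial = 1 + x := by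
    simp [Finset.sum_range_succ]
  rw [h2] at h
  have h3 := (abs_sub_le_iff.1 h).1
  norm_num [Nat.factorial] at h3
  nlinarith [sq_abs x, sq_nonneg x]

variable {Ω : Type*} [MeasureSpace Ω] [IsProbabilityMeasure (ℙ : Measure Ω)]

lemma aux_integrable_cast_Z (Z : Ω → ℕ) (hm : Measurable Z)
    (hv : ∀ ω, Z ω = 0 ∨ Z ω = 1) :
    Integrable (fun ω => (Z ω : ℝ)) ℙ := by
  refine Integrable.mono' (integrable_const 1) (measurable_from_nat.comp hm).aestronglyMeasurable
    (ae_of_all _ fun ω => ?_)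
  rcases hv ω with h | h <;> simp [h]

omit [IsProbabilityMeasure (ℙ : Measure Ω)] in
lemma aux_integral_cast_Z (β : ℝ) (Z : Ω → ℕ) (hm : Measurable Z)
    (hv : ∀ ω, Z ω = 0 ∨ Z ω = 1) (j : ℕ)
    (hd : ℙ {ω | Z ω = 1} = ENNReal.ofReal ((j : ℝ) ^ (-β))) :
    ∫ ω, (Z ω : ℝ) ∂ℙ = (j : ℝ) ^ (-β) := by
  have hset : MeasurableSet {ω | Z ω = 1} := hm (measurableSet_singleton 1)
  have heq : (fun ω => (Z ω : ℝ)) = ({ω | Z ω = 1}).indicator 1 := by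
    funext ω
    rcases hv ω with h | h <;> simp [Set.indicator, h]
  rw [heq, integral_indicator_one hset, measureReal_def, hd,
    ENNReal.toReal_ofReal (Real.rpow_nonneg (Nat.cast_nonneg j) _)]

lemma aux_mgf_single (β : ℝ) (Z : Ω → ℕ) (hm : Measurable Z)
    (hv : ∀ ω, Z ω = 0 ∨ Z ω = 1) (j : ℕ)
    (hd : ℙ {ω | Z ω = 1} = ENNReal.ofReal ((j : ℝ) ^ (-β))) (s : ℝ) :
    mgf (fun ω => (Z ω : ℝ)) ℙ s = 1 + (Real.exp s - 1) * (j : ℝ) ^ (-β) := by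
  have heq : (fun ω => Real.exp (s * (Z ω : ℝ)))
      = fun ω => 1 + (Real.exp s - 1) * (Z ω : ℝ) := by
    funext ω
    rcases hv ω with h | h <;> simp [h]
  rw [mgf, heq]
  rw [integral_add (integrable_const 1) ((aux_integrable_cast_Z Z hm hv).const_mul _),
    integral_const, integral_const_mul, aux_integral_cast_Z β Z hm hv j hd]
  simp

lemma aux_chernoff (β : ℝ) (Z : ℕ → Ω → ℕ)
    (hmeas : ∀ j, Measurable (Z j))
    (hval : ∀ j, ∀ ω, Z j ω = 0 ∨ Z j ω = 1)
    (hdist : ∀ j : ℕ, 1 ≤ j → ℙ {ω | Z j ω = 1} = ENNReal.ofReal ((j : ℝ) ^ (-β)))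
    (hindep : iIndepFun Z ℙ)
    (r : ℕ) {ε : ℝ} (hε0 : 0 < ε) (hε1 : ε ≤ 1) :
    ℙ {ω | (sampCount Z r ω : ℝ) ≤ (∑ j ∈ Finset.Icc 1 r, (j:ℝ)^(-β)) * (1 - ε)}
      + ℙ {ω | (∑ j ∈ Finset.Icc 1 r, (j:ℝ)^(-β)) * (1 + ε) ≤ (sampCount Z r ω : ℝ)}
      ≤ ENNReal.ofReal (2 * Real.exp (-(ε^2/4) * ∑ j ∈ Finset.Icc 1 r, (j:ℝ)^(-β))) := by
  set X : ℕ → Ω → ℝ := fun j ω => (Z j ω : ℝ) with hX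
  set a : ℝ := ∑ j ∈ Finset.Icc 1 r, (j:ℝ)^(-β) with ha
  have hXmeas : ∀ j, Measurable (X j) := fun j => measurable_from_nat.comp (hmeas j)
  have hXindep : iIndepFun X ℙ :=
    hindep.comp (fun _ (n : ℕ) => (n : ℝ)) (fun _ => measurable_from_nat)
  have ha0 : 0 ≤ a := Finset.sum_nonneg fun j _ => Real.rpow_nonneg (Nat.cast_nonneg j) _
  have hS : ∀ ω, (sampCount Z r ω : ℝ) = (∑ j ∈ Finset.Icc 1 r, X j) ω := by
    intro ω
    rw [sampCount, Finset.card_filter]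
    push_cast
    simp only [Finset.sum_apply]
    refine Finset.sum_congr rfl fun j _ => ?_
    rcases hval j ω with h | h <;> simp [hX, h]
  have h_int : ∀ s : ℝ, Integrable (fun ω => Real.exp (s * (∑ j ∈ Finset.Icc 1 r, X j) ω)) ℙ := by
    intro s
    refine hXindep.integrable_exp_mul_sum hXmeas fun j _ => ?_
    refine Integrable.mono' (integrable_const (Real.exp |s|))
      (measurable_exp.comp ((hXmeas j).const_mul s)).aestronglyMeasurable
      (ae_of_all _ fun ω => ?_)
    rw [Real.norm_eq_abs, abs_of_nonneg (Real.exp_pos _).le, Real.exp_le_exp]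
    rcases hval j ω with h | h <;> simp [hX, h, le_abs_self, abs_nonneg]
  have hmgf : ∀ s : ℝ, mgf (∑ j ∈ Finset.Icc 1 r, X j) ℙ s
      ≤ Real.exp ((Real.exp s - 1) * a) := by
    intro s
    rw [hXindep.mgf_sum hXmeas]
    calc ∏ j ∈ Finset.Icc 1 r, mgf (X j) ℙ s
        ≤ ∏ j ∈ Finset.Icc 1 r, Real.exp ((Real.exp s - 1) * (j:ℝ)^(-β)) := by
          refine Finset.prod_le_prod (fun j _ => mgf_nonneg) fun j hj => ?_
          rw [aux_mgf_single β (Z j) (hmeas j) (hval j) j (hdist j (Finset.mem_Icc.1 hj).1) s]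
          linarith [Real.add_one_le_exp ((Real.exp s - 1) * (j:ℝ)^(-β))]
      _ = Real.exp ((Real.exp s - 1) * a) := by
          rw [← Real.exp_sum, ha, Finset.mul_sum]
  have hup : ℙ {ω | a * (1 + ε) ≤ (sampCount Z r ω : ℝ)}
      ≤ ENNReal.ofReal (Real.exp (-(ε^2/4) * a)) := by
    have hseteq : {ω | a * (1 + ε) ≤ (sampCount Z r ω : ℝ)}
        = {ω | a * (1 + ε) ≤ (∑ j ∈ Finset.Icc 1 r, X j) ω} := by
      ext ω; rw [Set.mem_setOf_eq, Set.mem_setOf_eq, hS]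
    rw [hseteq, ENNReal.le_ofReal_iff_toReal_le (measure_ne_top _ _) (Real.exp_pos _).le]
    have h1 := measure_ge_le_exp_mul_mgf (μ := ℙ) (X := ∑ j ∈ Finset.Icc 1 r, X j)
      (a * (1 + ε)) (t := ε/2) (by linarith) (h_int _)
    refine h1.trans ?_
    have h2 : Real.exp (-(ε/2) * (a * (1+ε))) * mgf (∑ j ∈ Finset.Icc 1 r, X j) ℙ (ε/2)
        ≤ Real.exp (-(ε/2) * (a * (1+ε))) * Real.exp ((Real.exp (ε/2) - 1) * a) :=
      mul_le_mul_of_nonneg_left (hmgf _) (Real.exp_pos _).le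
    refine h2.trans ?_
    rw [← Real.exp_add, Real.exp_le_exp]
    have hq : Real.exp (ε/2) ≤ 1 + ε/2 + (ε/2)^2 :=
      aux_exp_le_quad (by rw [abs_of_nonneg (by linarith)]; linarith)
    nlinarith
  have hlo : ℙ {ω | (sampCount Z r ω : ℝ) ≤ a * (1 - ε)}
      ≤ ENNReal.ofReal (Real.exp (-(ε^2/4) * a)) := by
    have hseteq : {ω | (sampCount Z r ω : ℝ) ≤ a * (1 - ε)}
        = {ω | (∑ j ∈ Finset.Icc 1 r, X j) ω ≤ a * (1 - ε)} := by
      ext ω; rw [Set.mem_setOf_eq, Set.mem_setOf_eq, hS]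
    rw [hseteq, ENNReal.le_ofReal_iff_toReal_le (measure_ne_top _ _) (Real.exp_pos _).le]
    have h1 := measure_le_le_exp_mul_mgf (μ := ℙ) (X := ∑ j ∈ Finset.Icc 1 r, X j)
      (a * (1 - ε)) (t := -(ε/2)) (by linarith) (h_int _)
    refine h1.trans ?_
    have h2 : Real.exp (-(-(ε/2)) * (a * (1-ε))) * mgf (∑ j ∈ Finset.Icc 1 r, X j) ℙ (-(ε/2))
        ≤ Real.exp (-(-(ε/2)) * (a * (1-ε))) * Real.exp ((Real.exp (-(ε/2)) - 1) * a) :=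
      mul_le_mul_of_nonneg_left (hmgf _) (Real.exp_pos _).le
    refine h2.trans ?_
    rw [← Real.exp_add, Real.exp_le_exp]
    have hq : Real.exp (-(ε/2)) ≤ 1 + (-(ε/2)) + (-(ε/2))^2 :=
      aux_exp_le_quad (by rw [abs_of_nonpos (by linarith)]; linarith)
    nlinarith
  calc ℙ {ω | (sampCount Z r ω : ℝ) ≤ a * (1 - ε)}
        + ℙ {ω | a * (1 + ε) ≤ (sampCount Z r ω : ℝ)}
      ≤ ENNReal.ofReal (Real.exp (-(ε^2/4) * a)) + ENNReal.ofReal (Real.exp (-(ε^2/4) * a)) :=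
        add_le_add hlo hup
    _ = ENNReal.ofReal (2 * Real.exp (-(ε^2/4) * a)) := by
        rw [← ENNReal.ofReal_add (Real.exp_pos _).le (Real.exp_pos _).le]; ring_nf

lemma aux_log_sq_lt (β : ℝ) (hβ1 : β < 1) :
    ∃ r1 : ℝ, 3 ≤ r1 ∧ ∀ x : ℝ, r1 ≤ x → 12 * (Real.log x)^2 ≤ x ^ ((1-β)/4) := by
  have hc : (0:ℝ) < (1-β)/4 := by linarith
  have h := isLittleO_log_rpow_rpow_atTop (2:ℝ) hc
  have h2 := h.def (c := 1/12) (by norm_num)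
  have h3 : ∀ᶠ x : ℝ in atTop, 12 * (Real.log x)^2 ≤ x ^ ((1-β)/4) := by
    filter_upwards [h2, eventually_ge_atTop (1:ℝ)] with x hx hx1
    have hl : 0 ≤ Real.log x := Real.log_nonneg hx1
    have hxp : (0:ℝ) ≤ x := by linarith
    rw [Real.norm_eq_abs, Real.norm_eq_abs, abs_of_nonneg (Real.rpow_nonneg hl 2),
      abs_of_nonneg (Real.rpow_nonneg hxp _)] at hx
    have he : Real.log x ^ (2:ℝ) = Real.log x ^ 2 := by
      rw [show ((2:ℝ)) = ((2:ℕ):ℝ) by norm_num, Real.rpow_natCast]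
    rw [he] at hx
    linarith
  obtain ⟨r0, hr0⟩ := (h3.and (eventually_ge_atTop (3:ℝ))).exists_forall_of_atTop
  exact ⟨max r0 3, le_max_right _ _,
    fun x hx => (hr0 x (le_trans (le_max_left _ _) hx)).1⟩

lemma aux_t0_exists (β : ℝ) (hβ0 : 0 < β) (hβ1 : β < 1) (r1 : ℝ) :
    ∃ t0 : ℕ, ∀ t : ℕ, t0 ≤ t →
      1 ≤ Real.log t ∧ r1 ≤ (Real.log t) ^ (2/(1-β)) := by
  have hlogn : Tendsto (fun t : ℕ => Real.log t) atTop atTop :=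
    Real.tendsto_log_atTop.comp tendsto_natCast_atTop_atTop
  have hR0 : Tendsto (fun t : ℕ => (Real.log t) ^ (2/(1-β))) atTop atTop :=
    (tendsto_rpow_atTop (show (0:ℝ) < 2/(1-β) by apply div_pos <;> linarith)).comp hlogn
  have := (hlogn.eventually_ge_atTop 1).and (hR0.eventually_ge_atTop r1)
  obtain ⟨t0, ht0⟩ := eventually_atTop.1 this
  exact ⟨t0, ht0⟩

lemma aux_a_lower (β : ℝ) (hβ0 : 0 < β) (r : ℕ) (hr : 1 ≤ r) :
    (r:ℝ) ^ (1-β) ≤ ∑ j ∈ Finset.Icc 1 r, (j:ℝ)^(-β) := by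
  have hrpos : (0:ℝ) < r := by exact_mod_cast hr
  have h1 : ∀ j ∈ Finset.Icc 1 r, (r:ℝ)^(-β) ≤ (j:ℝ)^(-β) := by
    intro j hj
    obtain ⟨hj1, hjr⟩ := Finset.mem_Icc.1 hj
    exact Real.rpow_le_rpow_of_nonpos (by exact_mod_cast hj1)
      (by exact_mod_cast hjr) (by linarith)
  have h2 := Finset.card_nsmul_le_sum (Finset.Icc 1 r) (fun j => (j:ℝ)^(-β)) _ h1
  rw [Nat.card_Icc] at h2
  simp only [Nat.add_sub_cancel, nsmul_eq_mul] at h2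
  calc (r:ℝ) ^ (1-β) = (r:ℝ) ^ (1 + -β) := by ring_nf
    _ = (r:ℝ)^(1:ℝ) * (r:ℝ)^(-β) := Real.rpow_add hrpos 1 (-β)
    _ = (r:ℝ) * (r:ℝ)^(-β) := by rw [Real.rpow_one]
    _ ≤ _ := h2

lemma aux_exponent_bound (β r1 : ℝ) (hβ0 : 0 < β) (hβ1 : β < 1)
    (hr1 : 3 ≤ r1) (hr1prop : ∀ x : ℝ, r1 ≤ x → 12 * (Real.log x)^2 ≤ x ^ ((1-β)/4))
    (L : ℝ) (hL1 : 1 ≤ L) (r : ℕ) (hrR0 : L ^ (2/(1-β)) ≤ (r:ℝ))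
    (hR0r1 : r1 ≤ L ^ (2/(1-β)))
    (a : ℝ) (haa : (r:ℝ) ^ (1-β) ≤ a) :
    3 * L ^ ((3:ℝ)/2) ≤ ((1/Real.log r)^2/4) * a := by
  have h1β : (0:ℝ) < 1 - β := by linarith
  have hrr1 : r1 ≤ (r:ℝ) := le_trans hR0r1 hrR0
  have hr3 : (3:ℝ) ≤ r := le_trans hr1 hrr1
  have hrpos : (0:ℝ) < r := by linarith
  have hlogr1 : 1 ≤ Real.log r := by
    rw [Real.le_log_iff_exp_le hrpos]
    calc Real.exp 1 ≤ 2.7182818286 := Real.exp_one_lt_d9.le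
      _ ≤ (r:ℝ) := by linarith
  have hlrpos : (0:ℝ) < Real.log r := by linarith
  have hL0 : (0:ℝ) ≤ L := by linarith
  have hsplit : (r:ℝ) ^ (1-β) = (r:ℝ) ^ (3*(1-β)/4) * (r:ℝ) ^ ((1-β)/4) := by
    rw [← Real.rpow_add hrpos]; ring_nf
  have hexp : (2/(1-β)) * (3*(1-β)/4) = 3/2 := by field_simp; ring
  have hL32 : L ^ ((3:ℝ)/2) ≤ (r:ℝ) ^ (3*(1-β)/4) := by
    calc L ^ ((3:ℝ)/2) = (L ^ (2/(1-β))) ^ (3*(1-β)/4) := by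
          rw [← Real.rpow_mul hL0, hexp]
      _ ≤ (r:ℝ) ^ (3*(1-β)/4) :=
          Real.rpow_le_rpow (Real.rpow_nonneg hL0 _) hrR0 (by positivity)
  have h12 : 12 * (Real.log r)^2 ≤ (r:ℝ)^((1-β)/4) := hr1prop r hrr1
  have haL : L ^ ((3:ℝ)/2) * (12 * (Real.log r)^2) ≤ a := by
    calc L ^ ((3:ℝ)/2) * (12 * (Real.log r)^2)
        ≤ (r:ℝ) ^ (3*(1-β)/4) * (r:ℝ) ^ ((1-β)/4) :=
          mul_le_mul hL32 h12 (by positivity) (Real.rpow_nonneg hrpos.le _)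
      _ = (r:ℝ) ^ (1-β) := hsplit.symm
      _ ≤ a := haa
  have h5 := mul_le_mul_of_nonneg_left haL
    (show (0:ℝ) ≤ (1/Real.log r)^2/4 by positivity)
  calc 3 * L ^ ((3:ℝ)/2)
      = (1/Real.log r)^2/4 * (L ^ ((3:ℝ)/2) * (12 * (Real.log r)^2)) := by
        field_simp; ring
    _ ≤ _ := h5

end Aux

/-- Let `0 < β < 1` and `{Z_j}` be independent Bernoulli with
`P(Z_j = 1) = j^{−β}`; write `#E(r) = Σ_{j=1}^r Z_j` and `a(1,r) = Σ_{j=1}^r j^{−β}`.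
For the event `E_exp` that `a(1,r)(1 − 1/log r) ≤ #E(r) ≤ a(1,r)(1 + 1/log r)` holds
simultaneously for all integers `(log t)^{2/(1−β)} ≤ r ≤ t`, we have, for all
sufficiently large `t`, `P(E_exp) ≥ 1 − exp(−(log t)^{3/2})`. -/
theorem sample_count_uniform_bound
    {Ω : Type*} [MeasureSpace Ω] [IsProbabilityMeasure (ℙ : Measure Ω)]
    (β : ℝ) (hβ0 : 0 < β) (hβ1 : β < 1)
    (Z : ℕ → Ω → ℕ)
    (hmeas : ∀ j, Measurable (Z j))
    (hval : ∀ j, ∀ ω, Z j ω = 0 ∨ Z j ω = 1)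
    (hdist : ∀ j : ℕ, 1 ≤ j → ℙ {ω | Z j ω = 1} = ENNReal.ofReal ((j : ℝ) ^ (-β)))
    (hindep : iIndepFun Z ℙ) :
    ∃ t0 : ℕ, ∀ t : ℕ, t0 ≤ t →
      1 - ENNReal.ofReal (Real.exp (-(Real.log t) ^ ((3 : ℝ) / 2)))
        ≤ ℙ {ω | ∀ r : ℕ, (Real.log t) ^ (2 / (1 - β)) ≤ (r : ℝ) → r ≤ t →
              (∑ j ∈ Finset.Icc 1 r, (j : ℝ) ^ (-β)) * (1 - 1 / Real.log r)
                  ≤ (sampCount Z r ω : ℝ) ∧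
                (sampCount Z r ω : ℝ)
                  ≤ (∑ j ∈ Finset.Icc 1 r, (j : ℝ) ^ (-β)) * (1 + 1 / Real.log r)} := by
  obtain ⟨r1, hr13, hr1prop⟩ := aux_log_sq_lt β hβ1
  obtain ⟨t0, ht0⟩ := aux_t0_exists β hβ0 hβ1 r1
  refine ⟨t0, fun t ht => ?_⟩
  obtain ⟨hL1, hR0r1⟩ := ht0 t ht
  set L : ℝ := Real.log t with hLdef
  set R0 : ℝ := L ^ (2/(1-β)) with hR0def
  have hR03 : (3:ℝ) ≤ R0 := le_trans hr13 hR0r1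
  have htpos : 0 < t := by
    by_contra h
    push_neg at h
    interval_cases t
    simp [hLdef] at hL1
    norm_num at hL1
  -- the bad events
  set a : ℕ → ℝ := fun r => ∑ j ∈ Finset.Icc 1 r, (j:ℝ)^(-β) with hadef
  set bad : ℕ → Set Ω := fun r =>
    {ω | (sampCount Z r ω : ℝ) ≤ a r * (1 - 1/Real.log r)}
      ∪ {ω | a r * (1 + 1/Real.log r) ≤ (sampCount Z r ω : ℝ)} with hbaddef
  set sF : Finset ℕ := (Finset.Icc 1 t).filter (fun r => R0 ≤ (r:ℝ)) with hsFdef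
  -- per-r bound
  have hperR : ∀ r ∈ sF, ℙ (bad r) ≤ ENNReal.ofReal (2 * Real.exp (-3 * L ^ ((3:ℝ)/2))) := by
    intro r hr
    obtain ⟨hrIcc, hrR0⟩ := Finset.mem_filter.1 hr
    obtain ⟨hr1n, hrt⟩ := Finset.mem_Icc.1 hrIcc
    have hr3 : (3:ℝ) ≤ r := le_trans hR03 hrR0
    have hrpos : (0:ℝ) < r := by linarith
    have hlogr1 : 1 ≤ Real.log r := by
      rw [Real.le_log_iff_exp_le hrpos]
      calc Real.exp 1 ≤ 2.7182818286 := Real.exp_one_lt_d9.le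
        _ ≤ (r:ℝ) := by linarith
    have hlrpos : (0:ℝ) < Real.log r := by linarith
    have hε0 : (0:ℝ) < 1/Real.log r := by positivity
    have hε1 : 1/Real.log r ≤ 1 := by
      rw [div_le_one hlrpos]; exact hlogr1
    have hch := aux_chernoff β Z hmeas hval hdist hindep r hε0 hε1
    have hbound := aux_exponent_bound β r1 hβ0 hβ1 hr13 hr1prop L hL1 r hrR0 hR0r1
      (a r) (aux_a_lower β hβ0 r hr1n)
    calc ℙ (bad r)
        ≤ ℙ {ω | (sampCount Z r ω : ℝ) ≤ a r * (1 - 1/Real.log r)}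
          + ℙ {ω | a r * (1 + 1/Real.log r) ≤ (sampCount Z r ω : ℝ)} :=
          measure_union_le _ _
      _ ≤ ENNReal.ofReal (2 * Real.exp (-((1/Real.log r)^2/4) * a r)) := hch
      _ ≤ ENNReal.ofReal (2 * Real.exp (-3 * L ^ ((3:ℝ)/2))) := by
          refine ENNReal.ofReal_le_ofReal ?_
          have : Real.exp (-((1/Real.log r)^2/4) * a r) ≤ Real.exp (-3 * L ^ ((3:ℝ)/2)) := by
            rw [Real.exp_le_exp]
            nlinarith [hbound]
          linarith
  -- sum the bad probabilities
  have hsum : ℙ (⋃ r ∈ sF, bad r) ≤ ENNReal.ofReal (Real.exp (-L ^ ((3:ℝ)/2))) := by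
    have h1 : ℙ (⋃ r ∈ sF, bad r) ≤ ∑ r ∈ sF, ℙ (bad r) := measure_biUnion_finset_le sF bad
    have h2 : ∑ r ∈ sF, ℙ (bad r) ≤ ∑ _r ∈ sF, ENNReal.ofReal (2 * Real.exp (-3 * L ^ ((3:ℝ)/2))) :=
      Finset.sum_le_sum hperR
    have hcard : sF.card ≤ t := by
      calc sF.card ≤ (Finset.Icc 1 t).card := Finset.card_le_card (Finset.filter_subset _ _)
        _ = t := by rw [Nat.card_Icc]; omega
    have h3 : ∑ _r ∈ sF, ENNReal.ofReal (2 * Real.exp (-3 * L ^ ((3:ℝ)/2)))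
        = (sF.card : ENNReal) * ENNReal.ofReal (2 * Real.exp (-3 * L ^ ((3:ℝ)/2))) := by
      rw [Finset.sum_const, nsmul_eq_mul]
    have h4 : (sF.card : ENNReal) * ENNReal.ofReal (2 * Real.exp (-3 * L ^ ((3:ℝ)/2)))
        ≤ (t : ENNReal) * ENNReal.ofReal (2 * Real.exp (-3 * L ^ ((3:ℝ)/2))) :=
      mul_le_mul_left (by exact_mod_cast hcard) _
    have h5 : (t : ENNReal) * ENNReal.ofReal (2 * Real.exp (-3 * L ^ ((3:ℝ)/2)))
        = ENNReal.ofReal ((t:ℝ) * (2 * Real.exp (-3 * L ^ ((3:ℝ)/2)))) := by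
      rw [ENNReal.ofReal_mul (Nat.cast_nonneg t), ENNReal.ofReal_natCast]
    have h6 : (t:ℝ) * (2 * Real.exp (-3 * L ^ ((3:ℝ)/2))) ≤ Real.exp (-L ^ ((3:ℝ)/2)) := by
      have htR : (0:ℝ) < (t:ℝ) := by exact_mod_cast htpos
      have hLL : L ≤ L ^ ((3:ℝ)/2) := by
        calc L = L ^ (1:ℝ) := (Real.rpow_one L).symm
          _ ≤ L ^ ((3:ℝ)/2) := Real.rpow_le_rpow_of_exponent_le hL1 (by norm_num)
      have hL32one : 1 ≤ L ^ ((3:ℝ)/2) := le_trans hL1 hLL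
      have hlog2 : Real.log 2 ≤ 1 := by linarith [Real.log_two_lt_d9]
      have ht_exp : (t:ℝ) = Real.exp L := (Real.exp_log htR).symm
      have h2exp : (2:ℝ) = Real.exp (Real.log 2) := (Real.exp_log two_pos).symm
      calc (t:ℝ) * (2 * Real.exp (-3 * L ^ ((3:ℝ)/2)))
          = Real.exp L * (Real.exp (Real.log 2) * Real.exp (-3 * L ^ ((3:ℝ)/2))) := by
            rw [ht_exp]; nth_rewrite 1 [h2exp]; rw [← ht_exp]
        _ = Real.exp (L + Real.log 2 + -3 * L ^ ((3:ℝ)/2)) := by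
            rw [← Real.exp_add, ← Real.exp_add]; ring_nf
        _ ≤ Real.exp (-L ^ ((3:ℝ)/2)) := by
            rw [Real.exp_le_exp]; linarith
    calc ℙ (⋃ r ∈ sF, bad r) ≤ _ := h1
      _ ≤ _ := h2
      _ = _ := h3
      _ ≤ _ := h4
      _ = _ := h5
      _ ≤ ENNReal.ofReal (Real.exp (-L ^ ((3:ℝ)/2))) := ENNReal.ofReal_le_ofReal h6
  -- covering
  set G : Set Ω := {ω | ∀ r : ℕ, (Real.log t) ^ (2 / (1 - β)) ≤ (r : ℝ) → r ≤ t →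
      (∑ j ∈ Finset.Icc 1 r, (j : ℝ) ^ (-β)) * (1 - 1 / Real.log r)
          ≤ (sampCount Z r ω : ℝ) ∧
        (sampCount Z r ω : ℝ)
          ≤ (∑ j ∈ Finset.Icc 1 r, (j : ℝ) ^ (-β)) * (1 + 1 / Real.log r)} with hGdef
  have hcover : (Set.univ : Set Ω) ⊆ G ∪ ⋃ r ∈ sF, bad r := by
    intro ω _
    by_cases hω : ω ∈ G
    · exact Or.inl hω
    · right
      simp only [hGdef, Set.mem_setOf_eq, not_forall] at hω
      obtain ⟨r, hrR0', hrt', hfail⟩ := hω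
      have hrmem : r ∈ sF := by
        refine Finset.mem_filter.2 ⟨Finset.mem_Icc.2 ⟨?_, hrt'⟩, hrR0'⟩
        by_contra hr0
        push_neg at hr0
        interval_cases r
        simp at hrR0'
        linarith
      refine Set.mem_biUnion hrmem ?_
      rcases not_and_or.1 hfail with h | h
      · exact Set.mem_union_left _ (not_le.1 h).le
      · exact Set.mem_union_right _ (not_le.1 h).le
  have hone : (1 : ENNReal) ≤ ℙ G + ℙ (⋃ r ∈ sF, bad r) := by
    calc (1 : ENNReal) = ℙ (Set.univ : Set Ω) := (measure_univ).symm
      _ ≤ ℙ (G ∪ ⋃ r ∈ sF, bad r) := measure_mono hcover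
      _ ≤ ℙ G + ℙ (⋃ r ∈ sF, bad r) := measure_union_le _ _
  have hfinal : (1 : ENNReal) ≤ ℙ G + ENNReal.ofReal (Real.exp (-L ^ ((3:ℝ)/2))) :=
    le_trans hone (add_le_add_right hsum _)
  exact tsub_le_iff_right.2 hfinal
end

section
/- Let 0 < δ < 1, α_1 = 0 and α_l = 1 − l^{−δ} for l ≥ 2, and θ_{j,l} = (1−α_j)·Π_{i=j+1}^{l} α_i (with θ_{l,l} = 1−α_l). Let w_1, …, w_l be real numbers with 0 ≤ w_j ≤ 1 for all j, and suppose there is an integer 0 ≤ u < l and a number m ∈ [0,1] with w_j = m for all u < j ≤ l. Then |Σ_{j=1}^{l} θ_{j,l} w_j − m| ≤ Π_{j=u+1}^{l} α_j ≤ exp(−(l − u)/l^{δ}). -/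
open Finset Real

/-- The weight `α_l = 1 − l^{−δ}` (note `α_1 = 0`). -/
noncomputable def alphaWt (δ : ℝ) (l : ℕ) : ℝ := 1 - (l : ℝ) ^ (-δ)

/-- The expansion weight `θ_{j,l} = (1 − α_j)·Π_{i=j+1}^{l} α_i` (so `θ_{l,l} = 1 − α_l`). -/
noncomputable def thetaWt (δ : ℝ) (j l : ℕ) : ℝ :=
  (1 - alphaWt δ j) * ∏ i ∈ Finset.Icc (j + 1) l, alphaWt δ i

/-- Let `0 < δ < 1` and let `w_1, …, w_l ∈ [0,1]` be such that `w_j = m` for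
all `u < j ≤ l`, where `0 ≤ u < l` and `m ∈ [0,1]`. Then
`|Σ_{j=1}^{l} θ_{j,l} w_j − m| ≤ Π_{j=u+1}^{l} α_j ≤ exp(−(l − u)/l^δ)`. -/
theorem expansion_weights_mean_shift (δ : ℝ) (hδ0 : 0 < δ) (hδ1 : δ < 1)
    (l u : ℕ) (hu : u < l) (w : ℕ → ℝ) (m : ℝ)
    (hw : ∀ j ∈ Finset.Icc 1 l, 0 ≤ w j ∧ w j ≤ 1)
    (hm0 : 0 ≤ m) (hm1 : m ≤ 1)
    (hwm : ∀ j : ℕ, u < j → j ≤ l → w j = m) :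
    |(∑ j ∈ Finset.Icc 1 l, thetaWt δ j l * w j) - m|
        ≤ ∏ j ∈ Finset.Icc (u + 1) l, alphaWt δ j ∧
      ∏ j ∈ Finset.Icc (u + 1) l, alphaWt δ j
        ≤ Real.exp (-(((l : ℝ) - (u : ℝ)) / (l : ℝ) ^ δ)) := by
  have hl1 : 1 ≤ l := Nat.one_le_of_lt (Nat.lt_of_le_of_lt (Nat.zero_le u) hu)
  have hIcc : ∀ a x : ℕ, Finset.Icc (a + 1) x = Finset.Ioc a x := fun a x =>
    Finset.Icc_add_one_left_eq_Ioc a x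
  have hαle : ∀ j : ℕ, alphaWt δ j ≤ 1 := by
    intro j; unfold alphaWt
    have : (0:ℝ) ≤ (j:ℝ) ^ (-δ) := Real.rpow_nonneg (Nat.cast_nonneg j) _
    linarith
  have hαnn : ∀ j : ℕ, 1 ≤ j → 0 ≤ alphaWt δ j := by
    intro j hj; unfold alphaWt
    have h1 : (1:ℝ) ≤ (j:ℝ) := by exact_mod_cast hj
    have : (j:ℝ) ^ (-δ) ≤ 1 :=
      Real.rpow_le_one_of_one_le_of_nonpos h1 (by linarith)
    linarith
  set P : ℕ → ℝ := fun v => ∏ i ∈ Finset.Icc (v+1) l, alphaWt δ i with hPdef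
  have hPnn : ∀ v, 0 ≤ P v := by
    intro v
    exact Finset.prod_nonneg fun i hi => hαnn i (by have := (Finset.mem_Icc.mp hi).1; omega)
  have hPstep : ∀ i, i < l → P i = alphaWt δ (i+1) * P (i+1) := by
    intro i hi
    simp only [hPdef]
    rw [← Finset.Ico_add_one_right_eq_Icc, ← Finset.Ico_add_one_right_eq_Icc,
      Finset.prod_eq_prod_Ico_succ_bot (by omega : i + 1 < l + 1)]
  have htheta : ∀ i, i < l → thetaWt δ (i+1) l = P (i+1) - P i := by
    intro i hi
    rw [hPstep i hi]; unfold thetaWt; simp only [hPdef]; ring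
  have hα1 : alphaWt δ 1 = 0 := by simp [alphaWt]
  have hP0 : P 0 = 0 := by
    refine Finset.prod_eq_zero (i := 1) ?_ hα1
    simp [hl1]
  have hPl : P l = 1 := by simp [hPdef]
  have hsum : ∀ v, v ≤ l → ∑ j ∈ Finset.Ioc 0 v, thetaWt δ j l = P v := by
    intro v
    induction v with
    | zero => intro _; simp [hP0]
    | succ n ih =>
      intro hv
      rw [Finset.sum_Ioc_succ_top (Nat.zero_le n), ih (by omega),
        htheta n (by omega)]
      ring
  have hθnn : ∀ j, 1 ≤ j → 0 ≤ thetaWt δ j l := by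
    intro j hj
    unfold thetaWt
    apply mul_nonneg
    · have := hαle j; linarith
    · exact Finset.prod_nonneg fun i hi => hαnn i (by have := (Finset.mem_Icc.mp hi).1; omega)
  have hkey : (∑ j ∈ Finset.Icc 1 l, thetaWt δ j l * w j) - m
      = ∑ j ∈ Finset.Ioc 0 u, thetaWt δ j l * (w j - m) := by
    have h1 : (∑ j ∈ Finset.Icc 1 l, thetaWt δ j l * w j) - m
        = ∑ j ∈ Finset.Ioc 0 l, thetaWt δ j l * (w j - m) := by
      rw [hIcc 0 l, Finset.sum_congr rfl (fun j _ => mul_sub (thetaWt δ j l) (w j) m),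
        Finset.sum_sub_distrib, ← Finset.sum_mul, hsum l le_rfl, hPl, one_mul]
    rw [h1, ← Finset.sum_Ioc_consecutive _ (Nat.zero_le u) hu.le]
    have : ∑ j ∈ Finset.Ioc u l, thetaWt δ j l * (w j - m) = 0 := by
      apply Finset.sum_eq_zero
      intro j hj
      have h := Finset.mem_Ioc.mp hj
      rw [hwm j h.1 h.2]; ring
    rw [this, add_zero]
  constructor
  · rw [hkey]
    calc |∑ j ∈ Finset.Ioc 0 u, thetaWt δ j l * (w j - m)|
        ≤ ∑ j ∈ Finset.Ioc 0 u, |thetaWt δ j l * (w j - m)| :=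
          Finset.abs_sum_le_sum_abs _ _
      _ ≤ ∑ j ∈ Finset.Ioc 0 u, thetaWt δ j l := by
          apply Finset.sum_le_sum
          intro j hj
          have hjm := Finset.mem_Ioc.mp hj
          have hj2 : j ∈ Finset.Icc 1 l := Finset.mem_Icc.mpr ⟨hjm.1, by omega⟩
          have hwj := hw j hj2
          have hθ := hθnn j hjm.1
          rw [abs_mul, abs_of_nonneg hθ]
          have : |w j - m| ≤ 1 := by
            rw [abs_le]; constructor <;> linarith [hwj.1, hwj.2]
          nlinarith
      _ = P u := hsum u hu.le
  · have hcast : ∀ j ∈ Finset.Icc (u+1) l, alphaWt δ j ≤ Real.exp (-(l:ℝ) ^ (-δ)) := by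
      intro j hj
      have hjm := Finset.mem_Icc.mp hj
      have hj1 : (1:ℝ) ≤ (j:ℝ) := by exact_mod_cast (by omega : 1 ≤ j)
      have hjl : (j:ℝ) ≤ (l:ℝ) := by exact_mod_cast hjm.2
      have hmono : (l:ℝ) ^ (-δ) ≤ (j:ℝ) ^ (-δ) :=
        Real.rpow_le_rpow_of_nonpos (by linarith) hjl (by linarith)
      have hexp : alphaWt δ j ≤ Real.exp (-(j:ℝ) ^ (-δ)) := by
        unfold alphaWt
        have := Real.add_one_le_exp (-(j:ℝ) ^ (-δ))
        linarith
      exact hexp.trans (Real.exp_le_exp.mpr (by linarith))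
    calc ∏ j ∈ Finset.Icc (u+1) l, alphaWt δ j
        ≤ ∏ j ∈ Finset.Icc (u+1) l, Real.exp (-(l:ℝ) ^ (-δ)) := by
          apply Finset.prod_le_prod
          · intro i hi; exact hαnn i (by have := (Finset.mem_Icc.mp hi).1; omega)
          · exact hcast
      _ = Real.exp (-(((l:ℝ) - (u:ℝ)) / (l:ℝ) ^ δ)) := by
          rw [Finset.prod_const, ← Real.exp_nat_mul, Nat.card_Icc]
          congr 1
          have hcard : (l + 1 - (u+1) : ℕ) = l - u := by omega
          rw [hcard]
          have : ((l - u : ℕ) : ℝ) = (l:ℝ) - (u:ℝ) := by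
            rw [Nat.cast_sub hu.le]
          rw [this, Real.rpow_neg (Nat.cast_nonneg l)]
          field_simp
end

section
/- Let 0 < δ < 1, α_1 = 0 and α_l = 1 − l^{−δ} for l ≥ 2, and θ_{j,l} = (1−α_j)·Π_{i=j+1}^{l} α_i (with θ_{l,l} = 1−α_l). Then there exists a constant L_0 such that for all l ≥ L_0, Σ_{j=1}^{l} θ_{j,l}² ≤ 5(log l)²/l^{δ}. -/
open Finset Real Filter

lemma alpha_nonneg {δ : ℝ} (hδ : 0 ≤ δ) {i : ℕ} (hi : 1 ≤ i) : 0 ≤ alphaWt δ i := by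
  have h : (i:ℝ) ^ (-δ) ≤ 1 :=
    Real.rpow_le_one_of_one_le_of_nonpos (by exact_mod_cast hi) (by linarith)
  simp only [alphaWt]; linarith

lemma alpha_le_one {δ : ℝ} (i : ℕ) : alphaWt δ i ≤ 1 := by
  have h : (0:ℝ) ≤ (i:ℝ) ^ (-δ) := Real.rpow_nonneg (by positivity) _
  simp only [alphaWt]; linarith

lemma theta_sum (δ : ℝ) {l : ℕ} (hl : 1 ≤ l) :
    ∑ j ∈ Finset.Icc 1 l, thetaWt δ j l = 1 := by
  have key : ∀ j ∈ Finset.Icc 1 l, thetaWt δ j l =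
      (∏ i ∈ Finset.Icc (j+1) l, alphaWt δ i) - ∏ i ∈ Finset.Icc j l, alphaWt δ i := by
    intro j hj
    obtain ⟨hj1, hjl⟩ := Finset.mem_Icc.mp hj
    have hins : Finset.Icc j l = insert j (Finset.Icc (j+1) l) := by
      ext x; simp only [Finset.mem_Icc, Finset.mem_insert]; omega
    have hnm : j ∉ Finset.Icc (j+1) l := by simp
    rw [thetaWt, hins, Finset.prod_insert hnm]; ring
  rw [Finset.sum_congr rfl key]
  have hIcc : Finset.Icc 1 l = Finset.Ico 1 (l+1) := by
    rw [Finset.Ico_add_one_right_eq_Icc]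
  rw [hIcc, Finset.sum_Ico_eq_sum_range]
  have hre : ∀ i ∈ Finset.range (l + 1 - 1),
      ((∏ k ∈ Finset.Icc (1+i+1) l, alphaWt δ k) - ∏ k ∈ Finset.Icc (1+i) l, alphaWt δ k)
      = (fun m => ∏ k ∈ Finset.Icc (m+1) l, alphaWt δ k) (i+1)
        - (fun m => ∏ k ∈ Finset.Icc (m+1) l, alphaWt δ k) i := by
    intro i _
    simp only [Nat.add_comm 1 i]
  rw [Finset.sum_congr rfl hre, Finset.sum_range_sub
    (fun m => ∏ k ∈ Finset.Icc (m+1) l, alphaWt δ k)]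
  have h1 : Finset.Icc (l+1) l = ∅ := Finset.Icc_eq_empty (by omega)
  have h2 : ∏ k ∈ Finset.Icc (0+1) l, alphaWt δ k = 0 := by
    apply Finset.prod_eq_zero (Finset.mem_Icc.mpr ⟨le_refl 1, hl⟩)
    simp [alphaWt]
  simp only [Nat.add_sub_cancel]
  rw [h1, h2]
  simp

set_option maxHeartbeats 1000000 in
/-- For `0 < δ < 1`, there is a constant `L0` such that for all `l ≥ L0`,
`Σ_{j=1}^{l} θ_{j,l}² ≤ 5(log l)²/l^δ`. -/
theorem expansion_weights_sq_sum_bound (δ : ℝ) (hδ0 : 0 < δ) (hδ1 : δ < 1) :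
    ∃ L0 : ℕ, ∀ l : ℕ, L0 ≤ l →
      ∑ j ∈ Finset.Icc 1 l, (thetaWt δ j l) ^ 2
        ≤ 5 * (Real.log l) ^ 2 / (l : ℝ) ^ δ := by
  -- eventual conditions
  have hlog : ∀ᶠ l : ℕ in atTop, 1 ≤ Real.log l := by
    have := (Real.tendsto_log_atTop.comp tendsto_natCast_atTop_atTop (α := ℕ))
    exact this.eventually_ge_atTop 1
  have hpoly : ∀ᶠ l : ℕ in atTop, 2 * δ * Real.log l ≤ (l:ℝ) ^ (1 - δ) := by
    have hlo := isLittleO_log_rpow_atTop (r := 1 - δ) (by linarith)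
    have hb := hlo.bound (c := 1 / (2 * δ)) (by positivity)
    have hb' := (tendsto_natCast_atTop_atTop (R := ℝ)).eventually hb
    filter_upwards [hb', hlog] with l hball hl1
    have hrp : (0:ℝ) ≤ (l:ℝ) ^ (1 - δ) := Real.rpow_nonneg (by positivity) _
    rw [norm_eq_abs, norm_eq_abs, abs_of_nonneg (by linarith), abs_of_nonneg hrp] at hball
    have h2δ : 0 < 2 * δ := by linarith
    calc 2 * δ * Real.log l ≤ 2 * δ * (1 / (2*δ) * (l:ℝ)^(1-δ)) := by
          apply mul_le_mul_of_nonneg_left hball (le_of_lt h2δ)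
      _ = (l:ℝ)^(1-δ) := by field_simp
  obtain ⟨L0, hL0⟩ := eventually_atTop.mp (hlog.and hpoly)
  refine ⟨max L0 1, fun l hl => ?_⟩
  obtain ⟨hl1, hl2⟩ := hL0 l (le_trans (le_max_left _ _) hl)
  have hlge1 : 1 ≤ l := le_trans (le_max_right _ _) hl
  have hl0 : (0:ℝ) < l := by exact_mod_cast hlge1
  set M : ℝ := 5 * (Real.log l) ^ 2 / (l:ℝ) ^ δ with hM
  have hlδ : (0:ℝ) < (l:ℝ) ^ δ := Real.rpow_pos_of_pos hl0 δ
  have hlogsq : 1 ≤ (Real.log l)^2 := by nlinarith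
  -- per-term bound: 0 ≤ θ and θ ≤ M
  have htheta_nonneg : ∀ j ∈ Finset.Icc 1 l, 0 ≤ thetaWt δ j l := by
    intro j hj
    obtain ⟨hj1, hjl⟩ := Finset.mem_Icc.mp hj
    apply mul_nonneg
    · simp only [alphaWt]; ring_nf
      exact Real.rpow_nonneg (by positivity) _
    · exact Finset.prod_nonneg fun i hi =>
        alpha_nonneg (le_of_lt hδ0) (by have := Finset.mem_Icc.mp hi; omega)
  have hbound : ∀ j ∈ Finset.Icc 1 l, thetaWt δ j l ≤ M := by
    intro j hj
    obtain ⟨hj1, hjl⟩ := Finset.mem_Icc.mp hj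
    have hj0 : (0:ℝ) < j := by exact_mod_cast hj1
    have hone : 1 - alphaWt δ j = (j:ℝ) ^ (-δ) := by simp [alphaWt]
    have hprod_nonneg : 0 ≤ ∏ i ∈ Finset.Icc (j+1) l, alphaWt δ i :=
      Finset.prod_nonneg fun i hi =>
        alpha_nonneg (le_of_lt hδ0) (by have := Finset.mem_Icc.mp hi; omega)
    have hprod_le_one : ∏ i ∈ Finset.Icc (j+1) l, alphaWt δ i ≤ 1 :=
      Finset.prod_le_one (fun i hi =>
        alpha_nonneg (le_of_lt hδ0) (by have := Finset.mem_Icc.mp hi; omega))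
        (fun i _ => alpha_le_one i)
    have hjneg_nonneg : (0:ℝ) ≤ (j:ℝ) ^ (-δ) := Real.rpow_nonneg (le_of_lt hj0) _
    have hjneg_le_one : (j:ℝ) ^ (-δ) ≤ 1 :=
      Real.rpow_le_one_of_one_le_of_nonpos (by exact_mod_cast hj1) (by linarith)
    rcases le_or_gt l (2*j) with hcase | hcase
    · -- j ≥ l/2 : θ ≤ j^{-δ} ≤ 2 / l^δ ≤ M
      have step1 : thetaWt δ j l ≤ (j:ℝ) ^ (-δ) := by
        rw [thetaWt, hone]
        nlinarith
      have hhalf : (l:ℝ)/2 ≤ (j:ℝ) := by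
        have : (l:ℝ) ≤ 2*(j:ℝ) := by exact_mod_cast hcase
        linarith
      have hjδ : ((l:ℝ)/2) ^ δ ≤ (j:ℝ) ^ δ :=
        Real.rpow_le_rpow (by positivity) hhalf (le_of_lt hδ0)
      have hdiv : ((l:ℝ)/2) ^ δ = (l:ℝ)^δ / 2^δ :=
        Real.div_rpow (le_of_lt hl0) (by norm_num : (0:ℝ) ≤ 2) δ
      have h2δ : (2:ℝ)^δ ≤ 2 := by
        calc (2:ℝ)^δ ≤ (2:ℝ)^(1:ℝ) :=
              Real.rpow_le_rpow_of_exponent_le (by norm_num) (le_of_lt hδ1)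
          _ = 2 := by rw [Real.rpow_one]
      have hlow : (l:ℝ)^δ / 2 ≤ (j:ℝ)^δ := by
        have h2pos : (0:ℝ) < 2^δ := by positivity
        have : (l:ℝ)^δ / 2 ≤ (l:ℝ)^δ / 2^δ := by
          apply div_le_div_of_nonneg_left (le_of_lt hlδ) h2pos ?_
          exact h2δ
        linarith [hdiv ▸ hjδ]
      have hjδpos : (0:ℝ) < (j:ℝ)^δ := Real.rpow_pos_of_pos hj0 δ
      have step2 : (j:ℝ) ^ (-δ) ≤ 2 / (l:ℝ)^δ := by
        rw [Real.rpow_neg (le_of_lt hj0), inv_eq_one_div]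
        rw [div_le_div_iff₀ hjδpos hlδ]
        nlinarith
      have step3 : 2 / (l:ℝ)^δ ≤ M := by
        rw [hM]
        gcongr
        nlinarith
      calc thetaWt δ j l ≤ (j:ℝ)^(-δ) := step1
        _ ≤ 2 / (l:ℝ)^δ := step2
        _ ≤ M := step3
    · -- j < l/2 : θ ≤ ∏ ≤ exp(-(l-j) l^{-δ}) ≤ l^{-δ} ≤ M
      have hlnegpos : (0:ℝ) < (l:ℝ)^(-δ) := Real.rpow_pos_of_pos hl0 _
      have hfac : ∀ i ∈ Finset.Icc (j+1) l, alphaWt δ i ≤ Real.exp (-(l:ℝ)^(-δ)) := by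
        intro i hi
        obtain ⟨hi1, hi2⟩ := Finset.mem_Icc.mp hi
        have hi0' : 0 < i := by omega
        have hi0 : (0:ℝ) < i := by exact_mod_cast hi0'
        have hmono : (l:ℝ)^(-δ) ≤ (i:ℝ)^(-δ) := by
          rw [Real.rpow_neg (le_of_lt hl0), Real.rpow_neg (by positivity)]
          apply inv_anti₀ (Real.rpow_pos_of_pos hi0 δ)
          exact Real.rpow_le_rpow (le_of_lt hi0) (by exact_mod_cast hi2) (le_of_lt hδ0)
        have hexp := Real.add_one_le_exp (-(l:ℝ)^(-δ))
        simp only [alphaWt]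
        linarith
      have hprod : ∏ i ∈ Finset.Icc (j+1) l, alphaWt δ i
          ≤ Real.exp (-(l:ℝ)^(-δ)) ^ (l - j) := by
        have := Finset.prod_le_prod (s := Finset.Icc (j+1) l)
          (f := fun i => alphaWt δ i) (g := fun _ => Real.exp (-(l:ℝ)^(-δ)))
          (fun i hi => alpha_nonneg (le_of_lt hδ0) (by have := Finset.mem_Icc.mp hi; omega))
          hfac
        rwa [Finset.prod_const, Nat.card_Icc, show l + 1 - (j+1) = l - j by omega] at this
      have hcard : ((l - j : ℕ):ℝ) = (l:ℝ) - (j:ℝ) := by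
        rw [Nat.cast_sub hjl]
      have hexp_eq : Real.exp (-(l:ℝ)^(-δ)) ^ (l - j)
          = Real.exp (-(((l:ℝ) - (j:ℝ)) * (l:ℝ)^(-δ))) := by
        rw [← Real.exp_nat_mul, hcard]; ring_nf
      have hlj : (l:ℝ)/2 ≤ (l:ℝ) - (j:ℝ) := by
        have : (2:ℝ)*(j:ℝ) + 1 ≤ (l:ℝ) := by exact_mod_cast hcase
        linarith
      have hkey : δ * Real.log l ≤ ((l:ℝ) - (j:ℝ)) * (l:ℝ)^(-δ) := by
        have h1δ : (l:ℝ)^(1-δ) = (l:ℝ) * (l:ℝ)^(-δ) := by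
          rw [show (1:ℝ) - δ = 1 + (-δ) by ring, Real.rpow_add hl0, Real.rpow_one]
        have : (l:ℝ)/2 * (l:ℝ)^(-δ) ≤ ((l:ℝ) - (j:ℝ)) * (l:ℝ)^(-δ) :=
          mul_le_mul_of_nonneg_right hlj (le_of_lt hlnegpos)
        have h2 : δ * Real.log l ≤ (l:ℝ)^(1-δ)/2 := by linarith
        rw [h1δ] at h2
        linarith
      have hexp_le : Real.exp (-(((l:ℝ) - (j:ℝ)) * (l:ℝ)^(-δ))) ≤ (l:ℝ)^(-δ) := by
        conv_rhs => rw [Real.rpow_def_of_pos hl0]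
        apply Real.exp_le_exp.mpr
        nlinarith [hkey]
      have step1 : thetaWt δ j l ≤ (l:ℝ)^(-δ) := by
        rw [thetaWt, hone]
        calc (j:ℝ)^(-δ) * ∏ i ∈ Finset.Icc (j+1) l, alphaWt δ i
            ≤ 1 * ∏ i ∈ Finset.Icc (j+1) l, alphaWt δ i :=
              mul_le_mul_of_nonneg_right hjneg_le_one hprod_nonneg
          _ = ∏ i ∈ Finset.Icc (j+1) l, alphaWt δ i := one_mul _
          _ ≤ Real.exp (-(l:ℝ)^(-δ)) ^ (l - j) := hprod
          _ = Real.exp (-(((l:ℝ) - (j:ℝ)) * (l:ℝ)^(-δ))) := hexp_eq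
          _ ≤ (l:ℝ)^(-δ) := hexp_le
      have step2 : (l:ℝ)^(-δ) ≤ M := by
        rw [hM, Real.rpow_neg (le_of_lt hl0), inv_eq_one_div]
        apply (div_le_div_iff_of_pos_right hlδ).mpr
        nlinarith
      exact le_trans step1 step2
  calc ∑ j ∈ Finset.Icc 1 l, (thetaWt δ j l) ^ 2
      ≤ ∑ j ∈ Finset.Icc 1 l, M * thetaWt δ j l := by
        apply Finset.sum_le_sum
        intro j hj
        have h0 := htheta_nonneg j hj
        have hb := hbound j hj
        nlinarith
    _ = M * ∑ j ∈ Finset.Icc 1 l, thetaWt δ j l := by rw [Finset.mul_sum]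
    _ = M := by rw [theta_sum δ hlge1, mul_one]
end
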